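/- Under the same frame equations, the Codazzi equation (∇_{φU} A)ξ − (∇_ξ A)φU = (c/4)U implies: (φUβ) + (γ/α − c/(4α))(γ/α − c/(4α) + β²/α) − κ₁β²/α − β² − γ = 0; κ₃β = ξ(γ/α − c/(4α)); and (φUα) + 3β(γ/α − c/(4α)) − κ₁β − αβ = 0. -/

import Mathlib

lemma aux6 {V : Type*} [AddCommGroup V] [Module ℝ V] {u w x : V}
    (hind : LinearIndependent ℝ ![u, w, x]) {a b d : ℝ}
    (h : a • u + b • w + d • x = 0) : a = 0 ∧ b = 0 ∧ d = 0 := by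
  have := Fintype.linearIndependent_iff.mp hind ![a, b, d] ?_
  · exact ⟨this 0, this 1, this 2⟩
  · simpa [Fin.sum_univ_three] using h

theorem stmt_6 {V : Type*} [AddCommGroup V] [Module ℝ V]
    (A : V →ₗ[ℝ] V) (u w x : V) (c α β γ κ₁ κ₃ wα wβ xf : ℝ)
    (hc : c ≠ 0) (hα : α ≠ 0) (hβ : β ≠ 0)
    (hind : LinearIndependent ℝ ![u, w, x])
    (hAx : A x = α • x + β • u)
    (hAu : A u = (γ/α - c/(4*α) + β^2/α) • u + β • x)
    (hAw : A w = (γ/α - c/(4*α)) • w)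
    (hCodazzi :
      ((wα • x + α • (-((γ/α - c/(4*α)) • u)) + wβ • u
          + β • (κ₃ • w + (γ/α - c/(4*α)) • x))
        - A (-((γ/α - c/(4*α)) • u)))
      - ((xf • w + (γ/α - c/(4*α)) • (-(κ₁ • u) - β • x))
        - A (-(κ₁ • u) - β • x))
      = (c/4) • u) :
    wβ + (γ/α - c/(4*α)) * (γ/α - c/(4*α) + β^2/α) - κ₁ * β^2/α - β^2 - γ = 0 ∧
    κ₃ * β = xf ∧
    wα + 3*β*(γ/α - c/(4*α)) - κ₁*β - α*β = 0 := by
  set f := γ/α - c/(4*α) with hf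
  have h0 : (wβ - α*f + f*(f + β^2/α) + f*κ₁ - κ₁*(f + β^2/α) - β^2 - c/4) • u
      + (β*κ₃ - xf) • w
      + (wα + 3*β*f - κ₁*β - α*β) • x = 0 := by
    simp only [map_neg, map_sub, map_smul, hAu, hAx] at hCodazzi
    linear_combination (norm := module) hCodazzi
  obtain ⟨ha, hb, hd⟩ := aux6 hind h0
  have hfγ : α * f = γ - c/4 := by rw [hf]; field_simp
  refine ⟨?_, ?_, ?_⟩
  · have : wβ + f*(f + β^2/α) - κ₁*β^2/α - β^2 - γ
        = (wβ - α*f + f*(f + β^2/α) + f*κ₁ - κ₁*(f + β^2/α) - β^2 - c/4)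
          + (α*f - (γ - c/4)) := by ring
    rw [this, ha, hfγ]; ring
  · linarith [hb]
  · linarith [hd]
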